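/- Let n ≥ 2 and k be natural numbers. Suppose we are given k 'crossings', where crossing i (for i ∈ Fin k) consists of an over-strand label oᵢ ∈ Fin n, an under-strand label uᵢ ∈ Fin n with oᵢ ≠ uᵢ, and a crossing height tᵢ ∈ (0,1), and suppose the heights are pairwise distinct (tᵢ ≠ tⱼ for i ≠ j). Then there exist n functions f₀, …, f_{n-1} : [0,1] → [0,1], one for each strand label j ∈ Fin n, such that each fⱼ is continuous, strictly monotone increasing, satisfies fⱼ(0) = 0 and fⱼ(1) = 1, and such that for every crossing i there exist times s, s' ∈ [0,1] with s < s', f_{uᵢ}(s) = tᵢ, and f_{oᵢ}(s') = tᵢ (that is, the dancer on the under-strand of each crossing reaches the crossing height strictly before the dancer on the over-strand). -/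

import Mathlib

/-- Scheduling lemma for dancing a braid (underlying Theorem 3: danceability ≤ braid index).
Given `k` crossings on `n ≥ 2` strands, each crossing `i` having an over-strand `o i`,
a distinct under-strand `u i`, and a height `t i ∈ (0,1)`, with all heights pairwise
distinct, there exist continuous strictly increasing reparametrizations
`f j : [0,1] → [0,1]` with `f j 0 = 0`, `f j 1 = 1`, such that at every crossing the
under-strand dancer reaches the crossing height strictly before the over-strand dancer. -/
theorem braid_dance_scheduling
    (n k : ℕ) (hn : 2 ≤ n)
    (o u : Fin k → Fin n) (t : Fin k → ℝ)
    (hou : ∀ i, o i ≠ u i)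
    (ht : ∀ i, t i ∈ Set.Ioo (0 : ℝ) 1)
    (htdist : ∀ i j, i ≠ j → t i ≠ t j) :
    ∃ f : Fin n → ℝ → ℝ,
      (∀ j, ContinuousOn (f j) (Set.Icc 0 1)) ∧
      (∀ j, StrictMonoOn (f j) (Set.Icc 0 1)) ∧
      (∀ j, Set.MapsTo (f j) (Set.Icc 0 1) (Set.Icc 0 1)) ∧
      (∀ j, f j 0 = 0) ∧
      (∀ j, f j 1 = 1) ∧
      (∀ i, ∃ s s' : ℝ, s ∈ Set.Icc (0 : ℝ) 1 ∧ s' ∈ Set.Icc (0 : ℝ) 1 ∧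
        s < s' ∧ f (u i) s = t i ∧ f (o i) s' = t i) := by
  classical
  set c : ℝ := 1 / (2 * (k + 1)) with hc
  have hcpos : 0 < c := by positivity
  -- choose radii
  have hrdef : ∀ i : Fin k, ∃ r : ℝ, 0 < r ∧ r ≤ t i ∧ r ≤ 1 - t i ∧
      ∀ j, j ≠ i → r ≤ |t i - t j| := by
    intro i
    have hne : (Finset.univ : Finset (Fin k)).Nonempty := ⟨i, Finset.mem_univ i⟩
    refine ⟨min (min (t i) (1 - t i))
      (Finset.univ.inf' hne (fun j => if j = i then t i else |t i - t j|)), ?_, ?_, ?_, ?_⟩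
    · refine lt_min (lt_min (ht i).1 (by linarith [(ht i).2])) ?_
      rw [Finset.lt_inf'_iff]
      intro j _
      by_cases hji : j = i
      · simp [hji, (ht i).1]
      · simp only [hji, if_false]
        exact abs_pos.mpr (sub_ne_zero.mpr (htdist i j (Ne.symm hji)))
    · exact le_trans (min_le_left _ _) (min_le_left _ _)
    · exact le_trans (min_le_left _ _) (min_le_right _ _)
    · intro j hji
      refine le_trans (min_le_right _ _) ?_
      have := Finset.inf'_le (b := j) (fun j => if j = i then t i else |t i - t j|)
        (Finset.mem_univ j)
      simpa only [hji, if_false] using this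
  choose r hrpos hrle0 hrle1 hrsep using hrdef
  -- the bump functions
  set φ : Fin k → ℝ → ℝ := fun i x => c * max 0 (r i - |x - t i|) with hφ
  set sgn : Fin k → Fin n → ℝ := fun i j => if u i = j then 1 else if o i = j then -1 else 0
    with hsgn
  set g : Fin n → ℝ → ℝ := fun j x => ∑ i, sgn i j * φ i x with hg
  set f : Fin n → ℝ → ℝ := fun j x => x + g j x with hf
  -- basic facts about φ
  have hφ_lip : ∀ i x y, |φ i x - φ i y| ≤ c * |x - y| := by
    intro i x y
    have h1 : |φ i x - φ i y| = c * |max 0 (r i - |x - t i|) - max 0 (r i - |y - t i|)| := by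
      rw [hφ]; rw [← mul_sub, abs_mul, abs_of_pos hcpos]
    rw [h1]
    apply mul_le_mul_of_nonneg_left _ hcpos.le
    have e1 : (r i - |x - t i|) - (r i - |y - t i|) = |y - t i| - |x - t i| := by ring
    have e2 : (y - t i) - (x - t i) = y - x := by ring
    calc |max 0 (r i - |x - t i|) - max 0 (r i - |y - t i|)|
        = |max (r i - |x - t i|) 0 - max (r i - |y - t i|) 0| := by
          rw [max_comm, max_comm (r i - |y - t i|)]
      _ ≤ |(r i - |x - t i|) - (r i - |y - t i|)| := abs_max_sub_max_le_abs _ _ _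
      _ ≤ |x - y| := by
          rw [e1, abs_sub_comm x y]
          have h := abs_abs_sub_abs_le_abs_sub (y - t i) (x - t i)
          rwa [e2] at h
  have hφ_nonneg : ∀ i x, 0 ≤ φ i x := fun i x => by
    exact mul_nonneg hcpos.le (le_max_left _ _)
  have hφ_le : ∀ i x, φ i x ≤ c * r i := by
    intro i x
    have hmax : max 0 (r i - |x - t i|) ≤ r i :=
      max_le (hrpos i).le (by linarith [abs_nonneg (x - t i)])
    exact mul_le_mul_of_nonneg_left hmax hcpos.le
  have hφ_at : ∀ i, φ i (t i) = c * r i := by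
    intro i
    simp [hφ, abs_of_nonneg, max_eq_right (hrpos i).le]
  have hφ_zero : ∀ i x, r i ≤ |x - t i| → φ i x = 0 := by
    intro i x hx
    have : max 0 (r i - |x - t i|) = 0 := max_eq_left (by linarith)
    simp [hφ, this]
  have hsgn_abs : ∀ i j, |sgn i j| ≤ 1 := by
    intro i j
    rw [hsgn]; dsimp only
    split_ifs <;> norm_num
  -- Lipschitz bound on g
  have hg_lip : ∀ j x y, |g j x - g j y| ≤ (1/2) * |x - y| := by
    intro j x y
    have h1 : g j x - g j y = ∑ i, sgn i j * (φ i x - φ i y) := by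
      rw [hg]; rw [← Finset.sum_sub_distrib]; congr 1; ext i; ring
    rw [h1]
    calc |∑ i, sgn i j * (φ i x - φ i y)| ≤ ∑ i, |sgn i j * (φ i x - φ i y)| :=
          Finset.abs_sum_le_sum_abs _ _
      _ ≤ ∑ _i : Fin k, c * |x - y| := by
          apply Finset.sum_le_sum
          intro i _
          rw [abs_mul]
          calc |sgn i j| * |φ i x - φ i y| ≤ 1 * (c * |x - y|) :=
                mul_le_mul (hsgn_abs i j) (hφ_lip i x y) (abs_nonneg _) zero_le_one
            _ = c * |x - y| := one_mul _
      _ = k * (c * |x - y|) := by rw [Finset.sum_const, Finset.card_univ, Fintype.card_fin]; push_cast; ring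
      _ ≤ (1/2) * |x - y| := by
          have hk : (k : ℝ) * c ≤ 1/2 := by
            have hpos : (0:ℝ) < 2 * (k + 1) := by positivity
            rw [hc, mul_one_div, div_le_div_iff₀ hpos (by norm_num)]
            nlinarith [Nat.cast_nonneg (α := ℝ) k]
          nlinarith [abs_nonneg (x - y), Nat.cast_nonneg (α := ℝ) k]
  -- strict monotonicity (global)
  have hmono : ∀ j, StrictMono (f j) := by
    intro j
    intro x y hxy
    have h1 := hg_lip j y x
    have h2 : |y - x| = y - x := abs_of_pos (by linarith)
    rw [h2] at h1
    have h3 := abs_le.mp h1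
    rw [hf]; dsimp only
    linarith [h3.1]
  -- continuity (global)
  have hcont : ∀ j, Continuous (f j) := by
    intro j
    rw [hf]
    apply Continuous.add continuous_id
    apply continuous_finset_sum
    intro i _
    apply Continuous.mul continuous_const
    apply Continuous.mul continuous_const
    exact Continuous.max continuous_const
      (Continuous.sub continuous_const ((continuous_id.sub continuous_const).abs))
  -- endpoints
  have hf0 : ∀ j, f j 0 = 0 := by
    intro j
    have hg0 : g j 0 = 0 := by
      rw [hg]
      apply Finset.sum_eq_zero
      intro i _
      have : φ i 0 = 0 := hφ_zero i 0 (by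
        rw [zero_sub, abs_neg, abs_of_pos (ht i).1]; exact hrle0 i)
      rw [this, mul_zero]
    rw [hf]; dsimp only; rw [hg0, add_zero]
  have hf1 : ∀ j, f j 1 = 1 := by
    intro j
    have hg1 : g j 1 = 0 := by
      rw [hg]
      apply Finset.sum_eq_zero
      intro i _
      have : φ i 1 = 0 := hφ_zero i 1 (by
        rw [abs_of_pos (by linarith [(ht i).2])]; linarith [hrle1 i])
      rw [this, mul_zero]
    rw [hf]; dsimp only; rw [hg1, add_zero]
  -- value of g at a crossing height
  have hg_at : ∀ (i : Fin k) (j : Fin n), g j (t i) = sgn i j * (c * r i) := by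
    intro i j
    rw [hg]
    dsimp only
    rw [Finset.sum_eq_single i]
    · rw [hφ_at]
    · intro i' _ hi'
      have : φ i' (t i) = 0 := hφ_zero i' (t i) (by
        rw [abs_sub_comm]; exact hrsep i' i hi'.symm)
      rw [this, mul_zero]
    · intro h; exact absurd (Finset.mem_univ i) h
  refine ⟨f, fun j => (hcont j).continuousOn, fun j => (hmono j).strictMonoOn _, ?_, hf0, hf1, ?_⟩
  · intro j x hx
    constructor
    · rw [← hf0 j]; exact (hmono j).monotone hx.1
    · rw [← hf1 j]; exact (hmono j).monotone hx.2
  · intro i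
    have hti : t i ∈ Set.Icc (0:ℝ) 1 := ⟨(ht i).1.le, (ht i).2.le⟩
    have hsolve : ∀ j : Fin n, ∃ s ∈ Set.Icc (0:ℝ) 1, f j s = t i := by
      intro j
      have := intermediate_value_Icc (by norm_num : (0:ℝ) ≤ 1) (hcont j).continuousOn
      rw [hf0 j, hf1 j] at this
      obtain ⟨s, hs, hfs⟩ := this hti
      exact ⟨s, hs, hfs⟩
    obtain ⟨s, hs, hfs⟩ := hsolve (u i)
    obtain ⟨s', hs', hfs'⟩ := hsolve (o i)
    refine ⟨s, s', hs, hs', ?_, hfs, hfs'⟩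
    have hru : f (u i) (t i) = t i + c * r i := by
      rw [hf]; dsimp only; rw [hg_at]
      rw [hsgn]; simp
    have hro : f (o i) (t i) = t i - c * r i := by
      rw [hf]; dsimp only; rw [hg_at]
      rw [hsgn]
      have h1 : u i ≠ o i := (hou i).symm
      simp [h1]; ring
    have hcr : 0 < c * r i := mul_pos hcpos (hrpos i)
    have h1 : f (u i) s < f (u i) (t i) := by rw [hfs, hru]; linarith
    have h2 : f (o i) (t i) < f (o i) s' := by rw [hfs', hro]; linarith
    have hlt1 : s < t i := (hmono (u i)).lt_iff_lt.mp h1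
    have hlt2 : t i < s' := (hmono (o i)).lt_iff_lt.mp h2
    linarith
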